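/- For natural numbers 1 ≤ n₁ | n₂, η(C_{n₁} ⊕ C_{n₂}) = 2n₁ + n₂ − 2. -/

import Mathlib

/-- The `m`-th Davenport constant: smallest `t` such that every sequence (multiset) over `G`
of length `≥ t` contains `m` disjoint non-empty zero-sum subsequences. -/
noncomputable def DavenportM (G : Type*) [AddCommGroup G] (m : ℕ) : ℕ :=
  sInf {t | ∀ S : Multiset G, t ≤ Multiset.card S →
    ∃ L : Multiset (Multiset G), Multiset.card L = m ∧
      (∀ T ∈ L, T ≠ 0 ∧ T.sum = 0) ∧ L.sum ≤ S}

/-- The Davenport constant: smallest `t` such that every sequence over `G` of length `≥ t`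
has a non-empty zero-sum subsequence. -/
noncomputable def Davenport (G : Type*) [AddCommGroup G] : ℕ :=
  sInf {t | ∀ S : Multiset G, t ≤ Multiset.card S → ∃ T ≤ S, T ≠ 0 ∧ T.sum = 0}

/-- `η(G)`: smallest `t` such that every sequence over `G` of length `≥ t` has a non-empty
zero-sum subsequence of length at most `exp G`. -/
noncomputable def etaC (G : Type*) [AddCommGroup G] : ℕ :=
  sInf {t | ∀ S : Multiset G, t ≤ Multiset.card S →
    ∃ T ≤ S, T ≠ 0 ∧ T.sum = 0 ∧ Multiset.card T ≤ AddMonoid.exponent G}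

/-- The Erdős–Ginzburg–Ziv constant `s(G)`: smallest `t` such that every sequence over `G` of
length `≥ t` has a zero-sum subsequence of length exactly `exp G`. -/
noncomputable def egz (G : Type*) [AddCommGroup G] : ℕ :=
  sInf {t | ∀ S : Multiset G, t ≤ Multiset.card S →
    ∃ T ≤ S, T.sum = 0 ∧ Multiset.card T = AddMonoid.exponent G}

section EtaAux

open Multiset


-- sum of pairs
lemma aux_fst_sum {α β : Type*} [AddCommMonoid α] [AddCommMonoid β] (T : Multiset (α × β)) :
    T.sum.1 = (T.map Prod.fst).sum :=
  (map_multiset_sum (AddMonoidHom.fst α β) T).trans rfl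

lemma aux_snd_sum {α β : Type*} [AddCommMonoid α] [AddCommMonoid β] (T : Multiset (α × β)) :
    T.sum.2 = (T.map Prod.snd).sum :=
  (map_multiset_sum (AddMonoidHom.snd α β) T).trans rfl

-- map back
lemma aux_exists_map_eq_of_le_map {α β : Type*} {f : α → β} {R : Multiset β} {P : Multiset α}
    (h : R ≤ P.map f) : ∃ P' ≤ P, P'.map f = R := by
  classical
  induction R using Multiset.induction_on generalizing P with
  | empty => exact ⟨0, Multiset.zero_le _, rfl⟩
  | cons r R ih =>
      have hr : r ∈ P.map f := mem_of_le h (mem_cons_self _ _)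
      obtain ⟨a, haP, hfa⟩ := mem_map.1 hr
      have h' : R ≤ (P.erase a).map f := by
        rw [map_erase_of_mem _ _ haP, hfa]
        have := erase_le_erase r h
        rwa [erase_cons_head] at this
      obtain ⟨P', hP', hmap⟩ := ih h'
      refine ⟨a ::ₘ P', ?_, by rw [map_cons, hmap, hfa]⟩
      rw [← cons_erase haP]
      exact cons_le_cons _ hP'

-- decomposition
lemma aux_decomp {α : Type*} [DecidableEq α] {T A B : Multiset α} (h : T ≤ A + B) :
    ∃ TA TB, TA ≤ A ∧ TB ≤ B ∧ T = TA + TB := by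
  refine ⟨T ∩ A, T - A, inter_le_right, ?_, by rw [add_comm, sub_add_inter]⟩
  rw [tsub_le_iff_left]
  exact h

lemma aux_sum_of_join {α : Type*} [AddCommMonoid α] (P : Multiset (Multiset α)) :
    P.sum.sum = (P.map Multiset.sum).sum := by
  induction P using Multiset.induction_on with
  | empty => simp
  | cons T P ih => simp [ih]

lemma aux_card_of_join {α : Type*} (P : Multiset (Multiset α)) :
    card P.sum = (P.map (fun T => card T)).sum := by
  induction P using Multiset.induction_on with
  | empty => simp
  | cons T P ih => simp [ih]

lemma aux_shrink {α : Type*} (S : Multiset α) (k : ℕ) (h : k ≤ card S) :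
    ∃ S' ≤ S, card S' = k := by
  refine ⟨(S.toList.take k : List α), ?_, ?_⟩
  · have h1 : (S.toList.take k).Sublist S.toList := List.take_sublist _ _
    have := h1.subperm
    rw [← Multiset.coe_le] at this
    simpa using this
  · simp only [coe_card, List.length_take]
    rw [Multiset.length_toList]
    omega

open MvPolynomial in
lemma aux_cw (p : ℕ) (hp : p.Prime) {N k : ℕ} (v : Fin N → Fin k → ℤ) (hdeg : k * (p - 1) < N) :
    ∃ I : Finset (Fin N), I.Nonempty ∧ ∀ j : Fin k, (p : ℤ) ∣ ∑ i ∈ I, v i j := by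
  haveI : Fact p.Prime := ⟨hp⟩
  classical
  let f : Fin k → MvPolynomial (Fin N) (ZMod p) :=
    fun j => ∑ i : Fin N, MvPolynomial.C ((v i j : ZMod p)) * MvPolynomial.X i ^ (p - 1)
  have hdeg' : ∀ j, (f j).totalDegree ≤ p - 1 := by
    intro j
    refine (totalDegree_finset_sum _ _).trans ?_
    apply Finset.sup_le
    intro i _
    refine (totalDegree_mul _ _).trans ?_
    have h1 : (MvPolynomial.C ((v i j : ZMod p)) : MvPolynomial (Fin N) (ZMod p)).totalDegree = 0 :=
      totalDegree_C _
    have h2 : ((MvPolynomial.X i : MvPolynomial (Fin N) (ZMod p)) ^ (p - 1)).totalDegree ≤ p - 1 := by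
      refine (totalDegree_pow _ _).trans ?_
      simp [totalDegree_X]
    omega
  have hsum : (∑ j, (f j).totalDegree) < Fintype.card (Fin N) := by
    rw [Fintype.card_fin]
    calc (∑ j, (f j).totalDegree) ≤ ∑ _j : Fin k, (p - 1) := Finset.sum_le_sum fun j _ => hdeg' j
    _ = k * (p - 1) := by simp [Finset.sum_const, mul_comm]
    _ < N := hdeg
  have hdvd := char_dvd_card_solutions_of_fintype_sum_lt p hsum
  have h0 : ∀ j, eval (fun _ : Fin N => (0 : ZMod p)) (f j) = 0 := by
    intro j
    simp only [f, map_sum, map_mul, map_pow, eval_C, eval_X]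
    have : p - 1 ≠ 0 := by have := hp.two_le; omega
    simp [zero_pow this]
  let x₀ : { x : Fin N → ZMod p // ∀ j, eval x (f j) = 0 } := ⟨_, h0⟩
  have hcard : 1 < Fintype.card { x : Fin N → ZMod p // ∀ j, eval x (f j) = 0 } := by
    have hpos : 0 < Fintype.card { x : Fin N → ZMod p // ∀ j, eval x (f j) = 0 } :=
      Fintype.card_pos_iff.2 ⟨x₀⟩
    have hdvd' : p ∣ Fintype.card { x : Fin N → ZMod p // ∀ j, eval x (f j) = 0 } := by
      convert hdvd using 2
    have h1 := Nat.le_of_dvd hpos hdvd'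
    have := hp.two_le
    omega
  obtain ⟨y, hy⟩ := Fintype.exists_ne_of_one_lt_card hcard x₀
  have hyv : ∃ i, y.val i ≠ 0 := by
    by_contra hc
    push_neg at hc
    apply hy
    apply Subtype.ext
    funext i
    exact hc i
  refine ⟨Finset.univ.filter (fun i => y.val i ≠ 0), ?_, ?_⟩
  · obtain ⟨i, hi⟩ := hyv
    exact ⟨i, by simp [hi]⟩
  · intro j
    have heval := y.2 j
    have hterm : ∀ i : Fin N, ((v i j : ZMod p)) * (y.val i) ^ (p - 1)
        = if y.val i ≠ 0 then ((v i j : ZMod p)) else 0 := by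
      intro i
      by_cases hi : y.val i = 0
      · have : p - 1 ≠ 0 := by have := hp.two_le; omega
        simp [hi, zero_pow this]
      · rw [ZMod.pow_card_sub_one_eq_one hi]
        simp [hi]
    have h2 : (∑ i : Fin N, ((v i j : ZMod p)) * (y.val i) ^ (p - 1)) = 0 := by
      simpa only [f, map_sum, map_mul, map_pow, eval_C, eval_X] using heval
    have heval' : (∑ i ∈ Finset.univ.filter (fun i => y.val i ≠ 0), (v i j : ZMod p)) = 0 := by
      rw [Finset.sum_filter]
      calc (∑ i : Fin N, if y.val i ≠ 0 then ((v i j : ZMod p)) else 0)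
          = ∑ i : Fin N, ((v i j : ZMod p)) * (y.val i) ^ (p - 1) :=
            Finset.sum_congr rfl fun i _ => (hterm i).symm
        _ = 0 := h2
    have : ((∑ i ∈ Finset.univ.filter (fun i => y.val i ≠ 0), v i j : ℤ) : ZMod p) = 0 := by
      push_cast
      exact heval'
    exact (ZMod.intCast_zmod_eq_zero_iff_dvd _ _).1 this

lemma aux_enum {α : Type*} (S : Multiset α) :
    ∃ a : Fin (S.toList.length) → α, ((Finset.univ : Finset (Fin S.toList.length)).val.map a) = S := by
  refine ⟨S.toList.get, ?_⟩
  rw [Fin.univ_def]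
  show (Multiset.map S.toList.get ↑(List.finRange S.toList.length)) = S
  rw [Multiset.map_coe, List.map_get_finRange, Multiset.coe_toList]

lemma aux_dav2 (p : ℕ) (hp : p.Prime) (S : Multiset (ℤ × ℤ)) (hS : 2 * p - 1 ≤ card S) :
    ∃ T ≤ S, T ≠ 0 ∧ (p : ℤ) ∣ T.sum.1 ∧ (p : ℤ) ∣ T.sum.2 := by
  obtain ⟨a, ha⟩ := aux_enum S
  have hNcard : S.toList.length = card S := Multiset.length_toList S
  have hdeg : 2 * (p - 1) < S.toList.length := by have := hp.two_le; omega
  obtain ⟨I, hIne, hIdvd⟩ := aux_cw p hp (fun i => ![(a i).1, (a i).2]) hdeg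
  refine ⟨I.val.map a, ?_, ?_, ?_, ?_⟩
  · exact le_of_le_of_eq (Multiset.map_le_map (Finset.val_le_iff.2 (Finset.subset_univ I))) ha
  · have : card (I.val.map a) = I.card := by simp
    intro hc
    rw [hc] at this
    simp only [Multiset.card_zero] at this
    exact hIne.ne_empty (Finset.card_eq_zero.1 this.symm)
  · have h0 := hIdvd 0
    simp only [Matrix.cons_val_zero] at h0
    rw [aux_fst_sum, Multiset.map_map]
    exact h0
  · have h1 := hIdvd 1
    simp only [Matrix.cons_val_one, Matrix.head_cons] at h1
    rw [aux_snd_sum, Multiset.map_map]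
    exact h1

lemma aux_sub_sum_dvd {d : ℤ} {R T : Multiset (ℤ × ℤ)} (hRT : R ≤ T)
    (h1 : d ∣ T.sum.1) (h2 : d ∣ T.sum.2) (h1' : d ∣ R.sum.1) (h2' : d ∣ R.sum.2) :
    d ∣ (T - R).sum.1 ∧ d ∣ (T - R).sum.2 := by
  have hadd : (T - R) + R = T := tsub_add_cancel_of_le hRT
  have hsum : (T - R).sum + R.sum = T.sum := by rw [← Multiset.sum_add, hadd]
  constructor
  · have : (T - R).sum.1 = T.sum.1 - R.sum.1 := by
      have := congrArg Prod.fst hsum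
      simp only [Prod.fst_add] at this
      linarith
    rw [this]; exact dvd_sub h1 h1'
  · have : (T - R).sum.2 = T.sum.2 - R.sum.2 := by
      have := congrArg Prod.snd hsum
      simp only [Prod.snd_add] at this
      linarith
    rw [this]; exact dvd_sub h2 h2'

lemma aux_eta_prime (p : ℕ) (hp : p.Prime) (S : Multiset (ℤ × ℤ)) (hS : 3 * p - 2 ≤ card S) :
    ∃ T ≤ S, T ≠ 0 ∧ card T ≤ p ∧ (p : ℤ) ∣ T.sum.1 ∧ (p : ℤ) ∣ T.sum.2 := by
  obtain ⟨S', hS'le, hS'card⟩ := aux_shrink S (3 * p - 2) hS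
  obtain ⟨a, ha⟩ := aux_enum S'
  have hNcard : S'.toList.length = card S' := Multiset.length_toList S'
  have hp2 := hp.two_le
  have hdeg : 3 * (p - 1) < S'.toList.length := by omega
  obtain ⟨I, hIne, hIdvd⟩ := aux_cw p hp (fun i => ![(a i).1, (a i).2, 1]) hdeg
  set T₀ : Multiset (ℤ × ℤ) := I.val.map a with hT₀
  have hT₀S : T₀ ≤ S :=
    le_trans (le_of_le_of_eq (Multiset.map_le_map (Finset.val_le_iff.2 (Finset.subset_univ I))) ha)
      hS'le
  have hcardT₀ : card T₀ = I.card := by simp [hT₀]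
  have hd1 : (p : ℤ) ∣ T₀.sum.1 := by
    have h0 := hIdvd 0
    simp only [Matrix.cons_val_zero] at h0
    rw [aux_fst_sum, hT₀, Multiset.map_map]
    exact h0
  have hd2 : (p : ℤ) ∣ T₀.sum.2 := by
    have h1 := hIdvd 1
    simp only [Matrix.cons_val_one, Matrix.head_cons] at h1
    rw [aux_snd_sum, hT₀, Multiset.map_map]
    exact h1
  have hdcard : p ∣ I.card := by
    have h2 := hIdvd 2
    have : (∑ i ∈ I, ![(a i).1, (a i).2, 1] 2) = (I.card : ℤ) := by
      simp
    rw [this] at h2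
    exact_mod_cast h2
  have hIcard_le : I.card ≤ 3 * p - 2 := by
    have := Finset.card_le_univ I
    simpa [hNcard, hS'card] using this
  have hIpos : 0 < I.card := Finset.card_pos.2 hIne
  obtain ⟨t, ht⟩ := hdcard
  have htval : t = 1 ∨ t = 2 := by
    rcases Nat.lt_or_ge t 1 with h | h
    · interval_cases t <;> omega
    rcases Nat.lt_or_ge t 3 with h' | h'
    · interval_cases t <;> omega
    · exfalso
      have : 3 * p ≤ p * t := Nat.mul_le_mul_left p h' |>.trans_eq' (by ring)
      omega
  rcases htval with rfl | rfl
  · refine ⟨T₀, hT₀S, ?_, by omega, hd1, hd2⟩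
    intro hc; rw [hc] at hcardT₀; simp at hcardT₀; omega
  · -- card T₀ = 2p; split it
    have hT₀card : card T₀ = 2 * p := by omega
    have hT₀ne : T₀ ≠ 0 := by
      intro hc; rw [hc] at hT₀card; simp at hT₀card; omega
    obtain ⟨x, hx⟩ := Multiset.exists_mem_of_ne_zero hT₀ne
    have hcard₁ : card (T₀.erase x) = 2 * p - 1 := by
      rw [Multiset.card_erase_of_mem hx, hT₀card]
      rfl
    obtain ⟨R, hRle, hRne, hR1, hR2⟩ := aux_dav2 p hp (T₀.erase x) (le_of_eq hcard₁.symm)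
    have hRT₀ : R ≤ T₀ := hRle.trans (Multiset.erase_le _ _)
    have hcardR : card R ≤ 2 * p - 1 := hcard₁ ▸ Multiset.card_le_card hRle
    rcases le_or_gt (card R) p with h | h
    · exact ⟨R, hRT₀.trans hT₀S, hRne, h, hR1, hR2⟩
    · obtain ⟨hs1, hs2⟩ := aux_sub_sum_dvd hRT₀ hd1 hd2 hR1 hR2
      refine ⟨T₀ - R, (tsub_le_self).trans hT₀S, ?_, ?_, hs1, hs2⟩
      · have : card (T₀ - R) = 2 * p - card R := by
          rw [Multiset.card_sub hRT₀, hT₀card]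
        intro hc
        rw [hc] at this
        simp at this
        omega
      · rw [Multiset.card_sub hRT₀, hT₀card]
        omega

lemma aux_extract {α : Type*} [DecidableEq α] {Q : Multiset α → Prop} {c w : ℕ}
    (H : ∀ S : Multiset α, c ≤ card S → ∃ T ≤ S, T ≠ 0 ∧ card T ≤ w ∧ Q T) :
    ∀ (k : ℕ) (S : Multiset α), c + k * w ≤ card S + w →
      ∃ P : Multiset (Multiset α), card P = k ∧ P.sum ≤ S ∧
        ∀ T ∈ P, T ≠ 0 ∧ card T ≤ w ∧ Q T := by
  intro k
  induction k with
  | zero => exact fun S _ => ⟨0, by simp, Multiset.zero_le _, by simp⟩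
  | succ k ih =>
      intro S hS
      have hexp : c + (k + 1) * w = c + k * w + w := by ring
      rw [hexp] at hS
      have hc : c ≤ card S := by omega
      obtain ⟨T, hTle, hTne, hTcard, hTQ⟩ := H S hc
      have hcardsub : card (S - T) = card S - card T := Multiset.card_sub hTle
      have hrec : c + k * w ≤ card (S - T) + w := by
        rw [hcardsub]
        have h1 : card T ≤ card S := Multiset.card_le_card hTle
        omega
      obtain ⟨P, hPcard, hPle, hPQ⟩ := ih (S - T) hrec
      refine ⟨T ::ₘ P, by simp [hPcard], ?_, ?_⟩
      · rw [Multiset.sum_cons]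
        calc T + P.sum ≤ T + (S - T) := add_le_add_right hPle T
          _ = S := add_tsub_cancel_of_le hTle
      · intro U hU
        rcases Multiset.mem_cons.1 hU with rfl | hU'
        · exact ⟨hTne, hTcard, hTQ⟩
        · exact hPQ U hU'

lemma aux_dav_cyclic (m : ℕ) (hm : 1 ≤ m) (S : Multiset ℤ) (hS : m ≤ card S) :
    ∃ T ≤ S, T ≠ 0 ∧ (m : ℤ) ∣ T.sum := by
  haveI : NeZero m := ⟨by omega⟩
  set l := S.toList with hl
  have hlen : m ≤ l.length := by rw [hl, Multiset.length_toList]; exact hS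
  have hcard : Fintype.card (ZMod m) < Fintype.card (Fin (m + 1)) := by
    simp [ZMod.card]
  obtain ⟨i, j, hij, hF⟩ := Fintype.exists_ne_map_eq_of_card_lt
      (fun i : Fin (m + 1) => (((l.take (i : ℕ)).sum : ℤ) : ZMod m)) hcard
  -- wlog i < j
  obtain ⟨i', j', hij', hF'⟩ : ∃ i' j' : ℕ, i' < j' ∧ j' ≤ m ∧
      ((((l.take j').sum - (l.take i').sum : ℤ)) : ZMod m) = 0 := by
    rcases lt_or_gt_of_ne (Fin.val_ne_of_ne hij) with h | h
    · exact ⟨i, j, h, by omega, by rw [Int.cast_sub, hF, sub_self]⟩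
    · exact ⟨j, i, h, by omega, by rw [Int.cast_sub, hF, sub_self]⟩
  obtain ⟨hj'm, hF''⟩ := hF'
  set L : List ℤ := (l.take j').drop i' with hL
  have hsub : L.Sublist l := ((l.take j').drop_sublist i').trans (l.take_sublist j')
  have hTle : (L : Multiset ℤ) ≤ S := by
    have := hsub.subperm
    rw [← Multiset.coe_le] at this
    calc (L : Multiset ℤ) ≤ (l : Multiset ℤ) := this
      _ = S := by rw [hl, Multiset.coe_toList]
  have hlenL : L.length = j' - i' := by
    rw [hL, List.length_drop, List.length_take]
    omega
  have hsum : L.sum = (l.take j').sum - (l.take i').sum := by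
    have hsplit : (l.take j').take i' ++ L = l.take j' := List.take_append_drop _ _
    have htt : (l.take j').take i' = l.take i' := by
      rw [List.take_take]
      congr 1
      omega
    have := congrArg List.sum hsplit
    rw [List.sum_append, htt] at this
    linarith
  refine ⟨(L : Multiset ℤ), hTle, ?_, ?_⟩
  · intro hc
    have : L.length = 0 := by
      have := congrArg card hc
      simpa using this
    omega
  · have : ((Multiset.sum (L : Multiset ℤ) : ℤ) : ZMod m) = 0 := by
      rw [Multiset.sum_coe, hsum]
      exact hF''
    exact (ZMod.intCast_zmod_eq_zero_iff_dvd _ _).1 this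


lemma aux_sum_mono {α : Type*} [AddCommMonoid α] {P' P : Multiset (Multiset α)} (h : P' ≤ P) :
    P'.sum ≤ P.sum := by
  obtain ⟨D, rfl⟩ := Multiset.le_iff_exists_add.1 h
  rw [Multiset.sum_add]
  exact le_add_right _ _

lemma aux_join_bounds {α : Type*} {P' : Multiset (Multiset α)} {w : ℕ}
    (h : ∀ U ∈ P', U ≠ 0 ∧ card U ≤ w) :
    card P' ≤ card P'.sum ∧ card P'.sum ≤ card P' * w := by
  rw [aux_card_of_join]
  constructor
  · have h1 : card (P'.map (fun T => card T)) • 1 ≤ (P'.map (fun T => card T)).sum := by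
      apply Multiset.card_nsmul_le_sum
      intro x hx
      obtain ⟨U, hU, rfl⟩ := Multiset.mem_map.1 hx
      have := (h U hU).1
      rw [Nat.succ_le, Multiset.card_pos]
      exact this
    simpa using h1
  · have h2 : (P'.map (fun T => card T)).sum ≤ card (P'.map (fun T => card T)) • w := by
      apply Multiset.sum_le_card_nsmul
      intro x hx
      obtain ⟨U, hU, rfl⟩ := Multiset.mem_map.1 hx
      exact (h U hU).2
    simpa [smul_eq_mul] using h2

lemma aux_join_sum_fst {P' : Multiset (Multiset (ℤ × ℤ))} {d : ℤ} {f : Multiset (ℤ × ℤ) → ℤ}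
    (h : ∀ U ∈ P', U.sum.1 = d * f U) : P'.sum.sum.1 = d * (P'.map f).sum := by
  rw [aux_sum_of_join, aux_fst_sum, Multiset.map_map]
  have hc : Multiset.map (Prod.fst ∘ Multiset.sum) P' = Multiset.map (fun U => d * f U) P' :=
    Multiset.map_congr rfl (fun U hU => h U hU)
  rw [hc]
  exact Multiset.sum_map_mul_left

lemma aux_join_sum_snd {P' : Multiset (Multiset (ℤ × ℤ))} {d : ℤ} {f : Multiset (ℤ × ℤ) → ℤ}
    (h : ∀ U ∈ P', U.sum.2 = d * f U) : P'.sum.sum.2 = d * (P'.map f).sum := by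
  rw [aux_sum_of_join, aux_snd_sum, Multiset.map_map]
  have hc : Multiset.map (Prod.snd ∘ Multiset.sum) P' = Multiset.map (fun U => d * f U) P' :=
    Multiset.map_congr rfl (fun U hU => h U hU)
  rw [hc]
  exact Multiset.sum_map_mul_left

lemma aux_eta_all : ∀ (n : ℕ), 1 ≤ n → ∀ S : Multiset (ℤ × ℤ), 3 * n - 2 ≤ card S →
    ∃ T ≤ S, T ≠ 0 ∧ card T ≤ n ∧ (n : ℤ) ∣ T.sum.1 ∧ (n : ℤ) ∣ T.sum.2 := by
  intro n
  induction n using Nat.strong_induction_on with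
  | _ n ih =>
    intro hn S hS
    rcases eq_or_lt_of_le hn with h1 | h2
    · -- n = 1
      subst h1
      have h0 : 0 < card S := by omega
      obtain ⟨a, ha⟩ := Multiset.exists_mem_of_ne_zero (s := S) (by
        intro hc; rw [hc] at h0; simp at h0)
      refine ⟨{a}, Multiset.singleton_le.2 ha, by simp, by simp, one_dvd _, one_dvd _⟩
    · -- n ≥ 2
      set p := n.minFac with hpdef
      have hp : p.Prime := Nat.minFac_prime (by omega)
      have hp2 := hp.two_le
      set m := n / p with hmdef
      have hmp : m * p = n := Nat.div_mul_cancel n.minFac_dvd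
      have hm1 : 1 ≤ m := by
        rcases Nat.eq_zero_or_pos m with h | h
        · rw [h] at hmp; omega
        · exact h
      have hmn : m < n := Nat.div_lt_self (by omega) hp.one_lt
      have hq : p ≤ m * p := Nat.le_mul_of_pos_left p hm1
      have hcond : (3 * p - 2) + (3 * m - 2) * p ≤ card S + p := by
        have hsm : (3 * m - 2) * p = 3 * (m * p) - 2 * p := by
          rw [Nat.sub_mul]; ring_nf
        rw [hsm, hmp]
        omega
      obtain ⟨P, hPcard, hPle, hPprop⟩ :=
        aux_extract (fun S h => aux_eta_prime p hp S h) (3 * m - 2) S hcond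
      set g : Multiset (ℤ × ℤ) → ℤ × ℤ := fun U => (U.sum.1 / p, U.sum.2 / p) with hg
      have hcard' : 3 * m - 2 ≤ card (P.map g) := by simp [hPcard]
      obtain ⟨R, hRle, hRne, hRcard, hR1, hR2⟩ := ih m hmn hm1 (P.map g) hcard'
      obtain ⟨P', hP'le, hP'map⟩ := aux_exists_map_eq_of_le_map hRle
      have hP'card : card P' = card R := by rw [← hP'map]; simp
      have hmem : ∀ U ∈ P', U ≠ 0 ∧ card U ≤ p ∧ (p : ℤ) ∣ U.sum.1 ∧ (p : ℤ) ∣ U.sum.2 :=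
        fun U hU => hPprop U (Multiset.mem_of_le hP'le hU)
      have hbounds := aux_join_bounds (P' := P') (w := p)
        (fun U hU => ⟨(hmem U hU).1, (hmem U hU).2.1⟩)
      refine ⟨P'.sum, ?_, ?_, ?_, ?_, ?_⟩
      · exact (aux_sum_mono hP'le).trans hPle
      · rw [← Multiset.card_pos]
        have hcR : 0 < card R := by
          rw [Multiset.card_pos]; exact hRne
        omega
      · have : card P' * p ≤ m * p := Nat.mul_le_mul_right p (by omega)
        omega
      · have hfst : P'.sum.sum.1 = (p : ℤ) * ((P'.map g).map Prod.fst).sum := by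
          rw [Multiset.map_map]
          exact aux_join_sum_fst (fun U hU => (Int.mul_ediv_cancel' (hmem U hU).2.2.1).symm)
        rw [hfst, hP'map, ← aux_fst_sum]
        obtain ⟨k, hk⟩ := hR1
        refine ⟨k, ?_⟩
        rw [hk, ← hmp]
        push_cast
        ring
      · have hsnd : P'.sum.sum.2 = (p : ℤ) * ((P'.map g).map Prod.snd).sum := by
          rw [Multiset.map_map]
          exact aux_join_sum_snd (fun U hU => (Int.mul_ediv_cancel' (hmem U hU).2.2.2).symm)
        rw [hsnd, hP'map, ← aux_snd_sum]
        obtain ⟨k, hk⟩ := hR2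
        refine ⟨k, ?_⟩
        rw [hk, ← hmp]
        push_cast
        ring

lemma aux_eta_main (n₁ m : ℕ) (h₁ : 1 ≤ n₁) (hm : 1 ≤ m) (S : Multiset (ℤ × ℤ))
    (hS : 2 * n₁ + n₁ * m - 2 ≤ card S) :
    ∃ T ≤ S, T ≠ 0 ∧ card T ≤ n₁ * m ∧ (n₁ : ℤ) ∣ T.sum.1 ∧ ((n₁ * m : ℕ) : ℤ) ∣ T.sum.2 := by
  have hq : m * n₁ = n₁ * m := Nat.mul_comm m n₁
  have hcond : (3 * n₁ - 2) + m * n₁ ≤ card S + n₁ := by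
    rw [hq]
    omega
  obtain ⟨P, hPcard, hPle, hPprop⟩ :=
    aux_extract (fun S h => aux_eta_all n₁ h₁ S h) m S hcond
  set g2 : Multiset (ℤ × ℤ) → ℤ := fun U => U.sum.2 / n₁ with hg2
  obtain ⟨R, hRle, hRne, hRdvd⟩ := aux_dav_cyclic m hm (P.map g2) (by simp [hPcard])
  obtain ⟨P', hP'le, hP'map⟩ := aux_exists_map_eq_of_le_map hRle
  have hP'card : card P' = card R := by rw [← hP'map]; simp
  have hmem : ∀ U ∈ P', U ≠ 0 ∧ card U ≤ n₁ ∧ (n₁ : ℤ) ∣ U.sum.1 ∧ (n₁ : ℤ) ∣ U.sum.2 :=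
    fun U hU => hPprop U (Multiset.mem_of_le hP'le hU)
  have hbounds := aux_join_bounds (P' := P') (w := n₁)
    (fun U hU => ⟨(hmem U hU).1, (hmem U hU).2.1⟩)
  have hcardP' : card P' ≤ m := by
    have h1 : card R ≤ card (P.map g2) := Multiset.card_le_card hRle
    simp [hPcard] at h1
    omega
  refine ⟨P'.sum, (aux_sum_mono hP'le).trans hPle, ?_, ?_, ?_, ?_⟩
  · rw [← Multiset.card_pos]
    have hcR : 0 < card R := by rw [Multiset.card_pos]; exact hRne
    omega
  · have : card P' * n₁ ≤ m * n₁ := Nat.mul_le_mul_right n₁ hcardP'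
    omega
  · rw [aux_sum_of_join, aux_fst_sum, Multiset.map_map]
    apply Multiset.dvd_sum
    intro x hx
    obtain ⟨U, hU, rfl⟩ := Multiset.mem_map.1 hx
    exact (hmem U hU).2.2.1
  · have hsnd : P'.sum.sum.2 = (n₁ : ℤ) * (P'.map g2).sum :=
      aux_join_sum_snd (fun U hU => (Int.mul_ediv_cancel' (hmem U hU).2.2.2).symm)
    rw [hsnd, hP'map]
    obtain ⟨k, hk⟩ := hRdvd
    refine ⟨k, ?_⟩
    rw [hk]
    push_cast
    ring

lemma aux_exponent (n₁ n₂ : ℕ) (h₁ : 1 ≤ n₁) (h₂ : 1 ≤ n₂) (hd : n₁ ∣ n₂) :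
    AddMonoid.exponent (ZMod n₁ × ZMod n₂) = n₂ := by
  haveI : NeZero n₁ := ⟨by omega⟩
  haveI : NeZero n₂ := ⟨by omega⟩
  apply Nat.dvd_antisymm
  · rw [AddMonoid.exponent_dvd_iff_forall_nsmul_eq_zero]
    intro g
    have h1 : n₂ • g.1 = 0 := by
      rw [nsmul_eq_mul]
      rw [show ((n₂ : ℕ) : ZMod n₁) = 0 from (ZMod.natCast_eq_zero_iff _ _).2 hd]
      exact zero_mul _
    have h2 : n₂ • g.2 = 0 := by
      rw [nsmul_eq_mul]
      rw [ZMod.natCast_self]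
      exact zero_mul _
    have : n₂ • g = (n₂ • g.1, n₂ • g.2) := rfl
    rw [this, h1, h2]
    rfl
  · have h := AddMonoid.exponent_nsmul_eq_zero ((0 : ZMod n₁), (1 : ZMod n₂))
    have h2 : AddMonoid.exponent (ZMod n₁ × ZMod n₂) • (1 : ZMod n₂) = 0 := congrArg Prod.snd h
    rw [nsmul_eq_mul, mul_one] at h2
    exact (ZMod.natCast_eq_zero_iff _ _).1 h2

lemma aux_lower (n₁ n₂ : ℕ) (h₁ : 1 ≤ n₁) (h₂ : 1 ≤ n₂) (hd : n₁ ∣ n₂) :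
    ∃ S : Multiset (ZMod n₁ × ZMod n₂), card S = 2 * n₁ + n₂ - 3 ∧
      ¬∃ T ≤ S, T ≠ 0 ∧ T.sum = 0 ∧ card T ≤ n₂ := by
  haveI : NeZero n₁ := ⟨by omega⟩
  haveI : NeZero n₂ := ⟨by omega⟩
  have hn12 : n₁ ≤ n₂ := Nat.le_of_dvd h₂ hd
  classical
  refine ⟨Multiset.replicate (n₁ - 1) ((1 : ZMod n₁), (0 : ZMod n₂)) +
    (Multiset.replicate (n₂ - 1) ((0 : ZMod n₁), (1 : ZMod n₂)) +
      Multiset.replicate (n₁ - 1) ((1 : ZMod n₁), (1 : ZMod n₂))), ?_, ?_⟩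
  · simp only [Multiset.card_add, Multiset.card_replicate]
    omega
  · rintro ⟨T, hTle, hTne, hTsum, hTcard⟩
    obtain ⟨TA, TBC, hTA, hTBC, rfl⟩ := aux_decomp hTle
    obtain ⟨TB, TC, hTB, hTC, rfl⟩ := aux_decomp hTBC
    obtain ⟨a, haN, rfl⟩ := Multiset.le_replicate_iff.1 hTA
    obtain ⟨b, hbN, rfl⟩ := Multiset.le_replicate_iff.1 hTB
    obtain ⟨c, hcN, rfl⟩ := Multiset.le_replicate_iff.1 hTC
    have hcard : a + (b + c) ≤ n₂ := by
      simpa only [Multiset.card_add, Multiset.card_replicate] using hTcard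
    have hpos : 0 < a + (b + c) := by
      rcases Nat.eq_zero_or_pos (a + (b + c)) with h | h
      · exfalso
        apply hTne
        have : a = 0 ∧ b = 0 ∧ c = 0 := by omega
        simp [this.1, this.2.1, this.2.2]
      · exact h
    have h1 : ((a + c : ℕ) : ZMod n₁) = 0 := by
      have hf := congrArg Prod.fst hTsum
      simp only [Multiset.sum_add, Multiset.sum_replicate, Prod.fst_add, Prod.smul_fst,
        smul_zero, nsmul_eq_mul, Prod.fst_mul, Prod.fst_natCast, mul_one, mul_zero,
        Prod.fst_zero] at hf
      push_cast
      linear_combination hf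
    have h2 : ((b + c : ℕ) : ZMod n₂) = 0 := by
      have hf := congrArg Prod.snd hTsum
      simp only [Multiset.sum_add, Multiset.sum_replicate, Prod.snd_add, Prod.smul_snd,
        smul_zero, nsmul_eq_mul, Prod.snd_mul, Prod.snd_natCast, mul_one, mul_zero,
        Prod.snd_zero] at hf
      push_cast
      linear_combination hf
    have hd1 : n₁ ∣ a + c := (ZMod.natCast_eq_zero_iff _ _).1 h1
    have hd2 : n₂ ∣ b + c := (ZMod.natCast_eq_zero_iff _ _).1 h2
    -- case analysis
    rcases Nat.eq_zero_or_pos (b + c) with hbc | hbc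
    · -- b + c = 0
      have hb0 : b = 0 := by omega
      have hc0 : c = 0 := by omega
      have ha0 : a = 0 := by
        have : a + c < n₁ := by omega
        have := Nat.eq_zero_of_dvd_of_lt hd1 (by omega)
        omega
      omega
    · have hbc2 : b + c = n₂ := by
        have h3 : n₂ ≤ b + c := Nat.le_of_dvd hbc hd2
        omega
      have ha0 : a = 0 := by omega
      have hc0 : c = 0 := by
        have hdc : n₁ ∣ c := by
          have : a + c = c := by omega
          rwa [this] at hd1
        rcases Nat.eq_zero_or_pos c with h | h
        · exact h
        · have := Nat.le_of_dvd h hdc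
          omega
      omega

lemma aux_upper (n₁ n₂ : ℕ) (h₁ : 1 ≤ n₁) (h₂ : 1 ≤ n₂) (hd : n₁ ∣ n₂)
    (S : Multiset (ZMod n₁ × ZMod n₂)) (hcard : 2 * n₁ + n₂ - 2 ≤ card S) :
    ∃ T ≤ S, T ≠ 0 ∧ T.sum = 0 ∧ card T ≤ n₂ := by
  haveI : NeZero n₁ := ⟨by omega⟩
  haveI : NeZero n₂ := ⟨by omega⟩
  obtain ⟨m, hm⟩ := hd
  have hm1 : 1 ≤ m := by
    rcases Nat.eq_zero_or_pos m with h | h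
    · subst h; omega
    · exact h
  set f : ZMod n₁ × ZMod n₂ → ℤ × ℤ := fun x => ((x.1.val : ℤ), (x.2.val : ℤ)) with hf
  have hcard' : 2 * n₁ + n₁ * m - 2 ≤ card (S.map f) := by
    rw [Multiset.card_map]; omega
  obtain ⟨T', hT'le, hT'ne, hT'card, hT'd1, hT'd2⟩ := aux_eta_main n₁ m h₁ hm1 (S.map f) hcard'
  obtain ⟨T, hTle, hTmap⟩ := aux_exists_map_eq_of_le_map hT'le
  have hTcard : card T = card T' := by rw [← hTmap]; simp
  refine ⟨T, hTle, ?_, ?_, ?_⟩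
  · intro hc
    apply hT'ne
    rw [← hTmap, hc]
    rfl
  · have e1 : ((T'.sum.1 : ℤ) : ZMod n₁) = T.sum.1 := by
      rw [aux_fst_sum T', ← hTmap, Multiset.map_map]
      rw [Int.cast_multiset_sum, Multiset.map_map]
      rw [aux_fst_sum T]
      apply congrArg Multiset.sum
      apply Multiset.map_congr rfl
      intro x hx
      show (((x.1.val : ℤ)) : ZMod n₁) = x.1
      rw [Int.cast_natCast, ZMod.natCast_val, ZMod.cast_id]
    have e2 : ((T'.sum.2 : ℤ) : ZMod n₂) = T.sum.2 := by
      rw [aux_snd_sum T', ← hTmap, Multiset.map_map]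
      rw [Int.cast_multiset_sum, Multiset.map_map]
      rw [aux_snd_sum T]
      apply congrArg Multiset.sum
      apply Multiset.map_congr rfl
      intro x hx
      show (((x.2.val : ℤ)) : ZMod n₂) = x.2
      rw [Int.cast_natCast, ZMod.natCast_val, ZMod.cast_id]
    have key1 : T.sum.1 = 0 := by
      rw [← e1]
      rw [ZMod.intCast_zmod_eq_zero_iff_dvd]
      exact_mod_cast hT'd1
    have key2 : T.sum.2 = 0 := by
      rw [← e2]
      rw [ZMod.intCast_zmod_eq_zero_iff_dvd]
      have : ((n₂ : ℕ) : ℤ) ∣ T'.sum.2 := by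
        rw [hm]; exact_mod_cast hT'd2
      exact this
    have : T.sum = (T.sum.1, T.sum.2) := rfl
    rw [this, key1, key2]
    rfl
  · rw [hTcard, hm]
    exact hT'card


end EtaAux

theorem stmt_4 (n₁ n₂ : ℕ) (h₁ : 1 ≤ n₁) (h₂ : 1 ≤ n₂) (hd : n₁ ∣ n₂) :
    etaC (ZMod n₁ × ZMod n₂) = 2 * n₁ + n₂ - 2 := by
  have hexp := aux_exponent n₁ n₂ h₁ h₂ hd
  have hn12 : n₁ ≤ n₂ := Nat.le_of_dvd h₂ hd
  have hmem : (2 * n₁ + n₂ - 2) ∈ {t | ∀ S : Multiset (ZMod n₁ × ZMod n₂),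
      t ≤ Multiset.card S → ∃ T ≤ S, T ≠ 0 ∧ T.sum = 0 ∧
        Multiset.card T ≤ AddMonoid.exponent (ZMod n₁ × ZMod n₂)} := by
    intro S hcard
    obtain ⟨T, hTle, hTne, hTsum, hTcard⟩ := aux_upper n₁ n₂ h₁ h₂ hd S hcard
    exact ⟨T, hTle, hTne, hTsum, by rw [hexp]; exact hTcard⟩
  unfold etaC
  apply le_antisymm
  · exact Nat.sInf_le hmem
  · refine le_csInf ⟨_, hmem⟩ ?_
    intro t ht
    by_contra hlt
    push_neg at hlt
    obtain ⟨S₀, hS₀card, hS₀⟩ := aux_lower n₁ n₂ h₁ h₂ hd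
    apply hS₀
    obtain ⟨T, hTle, hTne, hTsum, hTc⟩ := ht S₀ (by omega)
    exact ⟨T, hTle, hTne, hTsum, by rw [hexp] at hTc; exact hTc⟩
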